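/- arXiv:1905.06600 — 3 statements merged into one kernel-verified Lean document; each statement's English description precedes it below -/
import Mathlib

section
/- Let P, Q, R be probability distributions on a finite alphabet X with P strictly positive, and let p_min = min_x P(x). For sufficiently small ε > 0, if D(P||Q) ≤ ε² and D(P||R) ≤ ε² and R(x) > p_min/2 for all x, then D(Q||R) ≤ (16/p_min)·ε². -/
open Finset

/-- For `0 < u ≤ 1`, `log u ≤ (u-1) - (u-1)²/2`. -/
lemma aux_log_le_small {u : ℝ} (hu : 0 < u) (hu1 : u ≤ 1) :
    Real.log u ≤ (u - 1) - (u - 1)^2 / 2 := by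
  set f : ℝ → ℝ := fun x => (x - 1) - (x - 1)^2 / 2 - Real.log x with hf
  have hderiv : ∀ x ∈ Set.Ioo u 1, HasDerivAt f (1 - (x - 1) - 1/x) x := by
    intro x hx
    have hx0 : 0 < x := lt_trans hu hx.1
    have h1 : HasDerivAt (fun x : ℝ => (x - 1) - (x - 1)^2 / 2) (1 - (x - 1)) x := by
      have := (((hasDerivAt_id x).sub_const 1).pow 2).div_const 2
      have h2 := ((hasDerivAt_id x).sub_const 1).sub this
      refine h2.congr_deriv ?_
      simp [id_eq]
    have h3 := h1.sub (Real.hasDerivAt_log hx0.ne')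
    refine h3.congr_deriv ?_
    ring
  have hanti : AntitoneOn f (Set.Icc u 1) := by
    apply antitoneOn_of_deriv_nonpos (convex_Icc u 1)
    · apply ContinuousOn.sub (by fun_prop)
      apply Real.continuousOn_log.mono
      intro x hx; exact Set.mem_compl_singleton_iff.mpr (ne_of_gt (lt_of_lt_of_le hu hx.1))
    · rw [interior_Icc]
      intro x hx
      exact (hderiv x hx).differentiableAt.differentiableWithinAt
    · rw [interior_Icc]
      intro x hx
      rw [(hderiv x hx).deriv]
      have hx0 : 0 < x := lt_trans hu hx.1
      have he : 1 - (x - 1) - 1/x = -((x-1)^2) / x := by field_simp; ring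
      rw [he]
      apply div_nonpos_of_nonpos_of_nonneg (by nlinarith [sq_nonneg (x-1)]) hx0.le
  have := hanti (Set.mem_Icc.mpr ⟨le_refl u, hu1⟩) (Set.mem_Icc.mpr ⟨hu1, le_refl 1⟩) hu1
  simp [hf, Real.log_one] at this
  nlinarith [this]

/-- For `1 ≤ s`, `log s ≤ (s-1) - (s-1)²/(2s)`. -/
lemma aux_log_le_big {s : ℝ} (hs : 1 ≤ s) :
    Real.log s ≤ (s - 1) - (s - 1)^2 / (2 * s) := by
  set f : ℝ → ℝ := fun x => (x - 1) - (x - 1)^2 / (2 * x) - Real.log x with hf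
  have hderiv : ∀ x ∈ Set.Ioo 1 s, HasDerivAt f ((x-1)^2/(2*x^2)) x := by
    intro x hx
    have hx0 : (0:ℝ) < x := lt_trans one_pos hx.1
    have h1 : HasDerivAt (fun x : ℝ => (x - 1)^2 / (2 * x))
        ((2*(x-1)*(2*x) - (x-1)^2*2) / (2*x)^2) x := by
      have := (((hasDerivAt_id x).sub_const 1).pow 2).div
        ((hasDerivAt_id x).const_mul 2) (by simp [id_eq]; positivity)
      refine this.congr_deriv ?_
      simp [id_eq]
    have h2 := (((hasDerivAt_id x).sub_const 1).sub h1).sub (Real.hasDerivAt_log hx0.ne')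
    refine h2.congr_deriv ?_
    field_simp
    ring
  have hmono : MonotoneOn f (Set.Icc 1 s) := by
    apply monotoneOn_of_deriv_nonneg (convex_Icc 1 s)
    · apply ContinuousOn.sub
      · apply ContinuousOn.sub (by fun_prop)
        apply ContinuousOn.div (by fun_prop) (by fun_prop)
        intro x hx
        have : (0:ℝ) < x := lt_of_lt_of_le one_pos hx.1
        positivity
      · apply Real.continuousOn_log.mono
        intro x hx
        exact Set.mem_compl_singleton_iff.mpr (ne_of_gt (lt_of_lt_of_le one_pos hx.1))
    · rw [interior_Icc]
      intro x hx
      exact (hderiv x hx).differentiableAt.differentiableWithinAt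
    · rw [interior_Icc]
      intro x hx
      rw [(hderiv x hx).deriv]
      have hx0 : (0:ℝ) < x := lt_trans one_pos hx.1
      positivity
  rcases eq_or_lt_of_le hs with h | h
  · simp [← h]
  · have := hmono (Set.mem_Icc.mpr ⟨le_refl 1, hs⟩) (Set.mem_Icc.mpr ⟨hs, le_refl s⟩) hs
    simp [hf, Real.log_one] at this
    nlinarith [this]

/-- Pointwise lower bound on the KL integrand:
`a log(a/b) ≥ (a-b) + (a-b)²/(2 max(a,b))`. -/
lemma key_kl_term {a b : ℝ} (ha : 0 < a) (hb : 0 < b) :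
    (a - b) + (a - b)^2 / (2 * max a b) ≤ a * Real.log (a / b) := by
  rw [Real.log_div ha.ne' hb.ne']
  rcases le_total a b with hab | hba
  · have h := aux_log_le_big ((one_le_div ha).mpr hab)
    rw [Real.log_div hb.ne' ha.ne'] at h
    have h2 := mul_le_mul_of_nonneg_left h ha.le
    have e : a * ((b/a - 1) - (b/a - 1)^2 / (2 * (b/a))) = (b - a) - (a - b)^2 / (2*b) := by
      field_simp
      ring
    rw [e] at h2
    rw [max_eq_right hab]
    nlinarith [h2]
  · have hu : 0 < b / a := div_pos hb ha
    have h := aux_log_le_small hu ((div_le_one ha).mpr hba)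
    rw [Real.log_div hb.ne' ha.ne'] at h
    have h2 := mul_le_mul_of_nonneg_left h ha.le
    have e : a * ((b/a - 1) - (b/a - 1)^2 / 2) = (b - a) - (a - b)^2 / (2*a) := by
      field_simp
      ring
    rw [e] at h2
    rw [max_eq_left hba]
    nlinarith [h2]

/-- A refined Pinsker-type inequality for finite probability vectors:
if `D(P‖Q) ≤ ε²` then `‖P-Q‖₁ ≤ (5/2)ε` and `‖P-Q‖₁² ≤ (2+5ε)ε²`. -/
lemma pinsker_refined {X : Type*} [Fintype X] [Nonempty X] (P Q : X → ℝ)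
    (hP0 : ∀ x, 0 < P x) (hQ0 : ∀ x, 0 < Q x)
    (hP1 : ∑ x, P x = 1) (hQ1 : ∑ x, Q x = 1) {ε : ℝ} (hε : 0 < ε)
    (hD : ∑ x, P x * Real.log (P x / Q x) ≤ ε^2) :
    (∑ x, |P x - Q x|) ≤ 5/2 * ε ∧ (∑ x, |P x - Q x|)^2 ≤ (2 + 5*ε) * ε^2 := by
  set S := ∑ x, |P x - Q x| with hSdef
  have hS0 : 0 ≤ S := sum_nonneg fun _ _ => abs_nonneg _
  have hS2 : S ≤ 2 := by
    have : S ≤ ∑ x, (P x + Q x) := by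
      apply sum_le_sum
      intro x _
      rw [abs_le]
      constructor <;> nlinarith [hP0 x, hQ0 x]
    rw [sum_add_distrib, hP1, hQ1] at this
    linarith
  have hquad : ∑ x, (P x - Q x)^2 / (2 * max (P x) (Q x)) ≤ ε^2 := by
    have hsum := Finset.sum_le_sum (fun x (_ : x ∈ univ) => key_kl_term (hP0 x) (hQ0 x))
    rw [Finset.sum_add_distrib, Finset.sum_sub_distrib, hP1, hQ1] at hsum
    simpa using le_trans (by linarith [hsum]) hD
  have hCS := Finset.sq_sum_div_le_sum_sq_div Finset.univ (fun x => |P x - Q x|)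
    (g := fun x => 2 * max (P x) (Q x))
    (fun x _ => by have := hP0 x; positivity)
  simp only [sq_abs] at hCS
  have hwpos : 0 < ∑ x, 2 * max (P x) (Q x) :=
    Finset.sum_pos (fun x _ => by have := hP0 x; positivity) univ_nonempty
  rw [div_le_iff₀ hwpos] at hCS
  have hw : ∑ x, 2 * max (P x) (Q x) ≤ 2 + 2*S := by
    have : ∑ x, 2 * max (P x) (Q x) ≤ ∑ x, (2 * P x + 2 * |P x - Q x|) := by
      apply sum_le_sum
      intro x _
      have h1 : Q x ≤ P x + |P x - Q x| := by
        have := neg_abs_le (P x - Q x); linarith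
      have h2 : P x ≤ P x + |P x - Q x| := le_add_of_nonneg_right (abs_nonneg _)
      have := max_le h2 h1
      linarith
    rw [sum_add_distrib] at this
    simp only [← mul_sum] at this ⊢
    rw [hP1, ← hSdef] at this
    linarith
  have hkey : S^2 ≤ (2 + 2*S) * ε^2 := by
    calc S^2 ≤ (∑ x, (P x - Q x)^2 / (2 * max (P x) (Q x))) * (∑ x, 2 * max (P x) (Q x)) := hCS
    _ ≤ ε^2 * (2 + 2*S) :=
        mul_le_mul hquad hw hwpos.le (sq_nonneg ε)
    _ = (2 + 2*S) * ε^2 := by ring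
  have h6 : S^2 ≤ 6 * ε^2 := by nlinarith
  have hS52 : S ≤ 5/2 * ε := by nlinarith [sq_nonneg ε, mul_pos hε hε]
  exact ⟨hS52, by nlinarith⟩

/-- Final arithmetic step. -/
lemma arith_final {p ε : ℝ} (hppos : 0 < p) (hε : 0 < ε) (hεp : ε * (3*p + 6) < p)
    (hden : 0 < p - 5/2*ε) :
    ((8 + 20*ε) * ε^2) / (p - 5/2*ε) ≤ (16 / p) * ε^2 := by
  rw [show (16 / p) * ε^2 = (16 * ε^2) / p by ring, div_le_div_iff₀ hden hppos]
  nlinarith [mul_nonneg (mul_nonneg hε.le hε.le) (sub_pos.mpr hεp).le,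
    mul_nonneg (mul_nonneg hε.le hε.le) hppos.le]

/-- For sufficiently small ε, if D(P‖Q) ≤ ε² and D(P‖R) ≤ ε² and R(x) > p_min/2,
then D(Q‖R) ≤ (16/p_min) ε². -/
theorem stmt_1 {X : Type*} [Fintype X] [Nonempty X] (P : X → ℝ)
    (hP0 : ∀ x, 0 < P x) (hP1 : ∑ x, P x = 1) :
    ∃ ε₀ > 0, ∀ ε : ℝ, 0 < ε → ε < ε₀ →
      ∀ Q R : X → ℝ,
        (∀ x, 0 < Q x) → ∑ x, Q x = 1 →
        (∀ x, 0 < R x) → ∑ x, R x = 1 →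
        ∑ x, P x * Real.log (P x / Q x) ≤ ε ^ 2 →
        ∑ x, P x * Real.log (P x / R x) ≤ ε ^ 2 →
        (∀ x, R x > (Finset.univ.inf' Finset.univ_nonempty P) / 2) →
        ∑ x, Q x * Real.log (Q x / R x) ≤
          (16 / Finset.univ.inf' Finset.univ_nonempty P) * ε ^ 2 := by
  set p := Finset.univ.inf' Finset.univ_nonempty P with hpdef
  obtain ⟨x₀, -, hx₀⟩ := Finset.exists_mem_eq_inf' Finset.univ_nonempty P
  have hppos : 0 < p := by rw [hpdef, hx₀]; exact hP0 x₀
  refine ⟨p / (3*p + 6), by positivity, ?_⟩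
  intro ε hε hεlt Q R hQ0 hQ1 hR0 hR1 hDQ hDR _
  have hple : ∀ x, p ≤ P x := fun x => Finset.inf'_le P (Finset.mem_univ x)
  obtain ⟨hSQ1, hSQ2⟩ := pinsker_refined P Q hP0 hQ0 hP1 hQ1 hε hDQ
  obtain ⟨hSR1, hSR2⟩ := pinsker_refined P R hP0 hR0 hP1 hR1 hε hDR
  set SQ := ∑ x, |P x - Q x| with hSQdef
  set SR := ∑ x, |P x - R x| with hSRdef
  have hSQ0 : 0 ≤ SQ := sum_nonneg fun _ _ => abs_nonneg _
  have hSR0 : 0 ≤ SR := sum_nonneg fun _ _ => abs_nonneg _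
  have hεp : ε * (3*p + 6) < p := (lt_div_iff₀ (by positivity)).mp hεlt
  have hden : 0 < p - 5/2*ε := by nlinarith
  -- lower bound on R
  have hRlow : ∀ x, p - 5/2*ε ≤ R x := by
    intro x
    have h1 : |P x - R x| ≤ SR :=
      Finset.single_le_sum (fun i (_ : i ∈ univ) => abs_nonneg (P i - R i)) (Finset.mem_univ x)
    have h2 := le_abs_self (P x - R x)
    have := hple x
    linarith
  -- χ²-type upper bound on D(Q‖R)
  have hchi : ∑ x, Q x * Real.log (Q x / R x) ≤ ∑ x, (Q x - R x)^2 / R x := by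
    have hterm : ∀ x ∈ univ,
        Q x * Real.log (Q x / R x) ≤ (Q x - R x)^2 / R x + (Q x - R x) := by
      intro x _
      have hlog := Real.log_le_sub_one_of_pos (div_pos (hQ0 x) (hR0 x))
      have hmul := mul_le_mul_of_nonneg_left hlog (hQ0 x).le
      have hRne : R x ≠ 0 := (hR0 x).ne'
      have e : Q x * (Q x / R x - 1) = (Q x - R x)^2 / R x + (Q x - R x) := by
        field_simp
        ring
      rw [e] at hmul
      exact hmul
    have hsum := Finset.sum_le_sum hterm
    rw [Finset.sum_add_distrib, Finset.sum_sub_distrib, hQ1, hR1] at hsum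
    linarith
  -- bound the χ² sum
  have hU : ∑ x, |Q x - R x| ≤ SQ + SR := by
    rw [hSQdef, hSRdef, ← Finset.sum_add_distrib]
    apply sum_le_sum
    intro x _
    calc |Q x - R x| = |(Q x - P x) + (P x - R x)| := by ring_nf
      _ ≤ |Q x - P x| + |P x - R x| := abs_add_le _ _
      _ = |P x - Q x| + |P x - R x| := by rw [abs_sub_comm]
  have hU0 : 0 ≤ ∑ x, |Q x - R x| := sum_nonneg fun _ _ => abs_nonneg _
  have hsq : ∑ x, (Q x - R x)^2 ≤ (SQ + SR)^2 := by
    calc ∑ x, (Q x - R x)^2 = ∑ x, |Q x - R x|^2 := by simp [sq_abs]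
      _ ≤ (∑ x, |Q x - R x|)^2 :=
          Finset.sum_sq_le_sq_sum_of_nonneg (fun i _ => abs_nonneg _)
      _ ≤ (SQ + SR)^2 := by nlinarith
  have hUb : (SQ + SR)^2 ≤ (8 + 20*ε) * ε^2 := by nlinarith
  have hchi2 : ∑ x, (Q x - R x)^2 / R x ≤ ((8 + 20*ε) * ε^2) / (p - 5/2*ε) := by
    calc ∑ x, (Q x - R x)^2 / R x ≤ ∑ x, (Q x - R x)^2 / (p - 5/2*ε) := by
          apply sum_le_sum
          intro x _
          exact div_le_div_of_nonneg_left (sq_nonneg _) hden (hRlow x)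
      _ = (∑ x, (Q x - R x)^2) / (p - 5/2*ε) := by rw [Finset.sum_div]
      _ ≤ ((8 + 20*ε) * ε^2) / (p - 5/2*ε) := by
          apply (div_le_div_iff_of_pos_right hden).mpr
          linarith
  have hfinal : ((8 + 20*ε) * ε^2) / (p - 5/2*ε) ≤ (16 / p) * ε^2 :=
    arith_final hppos hε hεp hden
  calc ∑ x, Q x * Real.log (Q x / R x) ≤ ∑ x, (Q x - R x)^2 / R x := hchi
    _ ≤ ((8 + 20*ε) * ε^2) / (p - 5/2*ε) := hchi2
    _ ≤ (16 / p) * ε^2 := hfinal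
end

section
/- For p ∈ (0,1) and all real t, log(p·e^t + (1-p)·e^{-(p/(1-p))t}) ≥ (p/2)·min{δ², t²}, where δ is a constant for which the inequality log(p·e^s + (1-p)·e^{-(p/(1-p))s}) > (p/2)s² holds for all 0 < |s| ≤ δ. -/
/-- For p ∈ (0,1) and all t, log(p e^t + (1-p) e^{-(p/(1-p)) t}) ≥ (p/2) min{δ², t²},
given that the strict inequality holds for all 0 < |s| ≤ δ. -/
theorem stmt_5 (p δ : ℝ) (hp : 0 < p) (hp1 : p < 1) (hδ : 0 < δ)
    (hδ' : ∀ s : ℝ, 0 < |s| → |s| ≤ δ →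
      (p / 2) * s ^ 2 <
        Real.log (p * Real.exp s + (1 - p) * Real.exp (-(p / (1 - p)) * s))) :
    ∀ t : ℝ,
      (p / 2) * min (δ ^ 2) (t ^ 2) ≤
        Real.log (p * Real.exp t + (1 - p) * Real.exp (-(p / (1 - p)) * t)) := by
  intro t
  have h1p : (0:ℝ) < 1 - p := by linarith
  set c : ℝ := p / (1 - p) with hc
  have hcpos : 0 < c := div_pos hp h1p
  set h : ℝ → ℝ := fun s => p * Real.exp s + (1 - p) * Real.exp (-c * s) with hh
  have hpos : ∀ s, 0 < h s := fun s => by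
    have := Real.exp_pos s; have := Real.exp_pos (-c * s); positivity
  have hderiv : ∀ s : ℝ, HasDerivAt h (p * Real.exp s - p * Real.exp (-c * s)) s := by
    intro s
    have h2 : HasDerivAt (fun x : ℝ => Real.exp (-c * x)) (Real.exp (-c * s) * (-c)) s := by
      have h3 := ((hasDerivAt_id s).const_mul (-c)).exp
      simp only [id_eq, mul_one] at h3
      exact h3
    have hd := ((Real.hasDerivAt_exp s).const_mul p).add (h2.const_mul (1 - p))
    have hpc : (1 - p) * c = p := by rw [hc]; field_simp
    convert hd using 1
    · rfl
    · rfl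
    · rfl
    rw [hc]
    field_simp
    ring
  have hdiff : Differentiable ℝ h := fun s => (hderiv s).differentiableAt
  have hderiveq : ∀ s, deriv h s = p * Real.exp s - p * Real.exp (-c * s) :=
    fun s => (hderiv s).deriv
  -- monotone on [0, ∞)
  have hmono : MonotoneOn h (Set.Ici (0:ℝ)) := by
    apply monotoneOn_of_deriv_nonneg (convex_Ici 0) hdiff.continuous.continuousOn
      (hdiff.differentiableOn)
    intro x hx
    rw [interior_Ici] at hx
    have hx0 : 0 < x := hx
    rw [hderiveq]
    have hx' : -c * x ≤ x := by nlinarith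
    have := Real.exp_le_exp.mpr hx'
    nlinarith
  -- antitone on (-∞, 0]
  have hanti : AntitoneOn h (Set.Iic (0:ℝ)) := by
    apply antitoneOn_of_deriv_nonpos (convex_Iic 0) hdiff.continuous.continuousOn
      (hdiff.differentiableOn)
    intro x hx
    rw [interior_Iic] at hx
    have hx0 : x < 0 := hx
    rw [hderiveq]
    have hx' : x ≤ -c * x := by nlinarith
    have := Real.exp_le_exp.mpr hx'
    nlinarith
  rcases le_or_gt (|t|) δ with hle | hgt
  · rcases eq_or_ne t 0 with rfl | ht0
    · simp only [mul_zero, Real.exp_zero, mul_one]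
      rw [show p + (1 - p) = 1 by ring, Real.log_one]
      have h0 : (0:ℝ) ^ 2 = 0 := by norm_num
      rw [h0, min_eq_right (sq_nonneg δ), mul_zero]
    · have := hδ' t (abs_pos.mpr ht0) hle
      have hmin : min (δ ^ 2) (t ^ 2) ≤ t ^ 2 := min_le_right _ _
      have : (p/2) * min (δ ^ 2) (t ^ 2) ≤ (p/2) * t ^ 2 := by
        apply mul_le_mul_of_nonneg_left hmin; positivity
      linarith [hδ' t (abs_pos.mpr ht0) hle]
  · have hmin : min (δ ^ 2) (t ^ 2) = δ ^ 2 := by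
      apply min_eq_left
      nlinarith [abs_nonneg t, sq_abs t]
    rw [hmin]
    rcases le_or_gt 0 t with htpos | htneg
    · have htδ : δ ≤ t := by rw [abs_of_nonneg htpos] at hgt; exact hgt.le
      have hht : h δ ≤ h t := hmono (le_of_lt hδ) (le_trans hδ.le htδ) htδ
      have hlog : Real.log (h δ) ≤ Real.log (h t) :=
        Real.log_le_log (hpos δ) hht
      have hδ2 := hδ' δ (by rwa [abs_of_pos hδ]) (le_of_eq (abs_of_pos hδ))
      calc (p/2) * δ ^ 2 ≤ Real.log (h δ) := (hδ2).le
        _ ≤ Real.log (h t) := hlog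
    · have htδ : t ≤ -δ := by
        rw [abs_of_neg htneg] at hgt; linarith
      have hht : h (-δ) ≤ h t :=
        hanti (show t ∈ Set.Iic (0:ℝ) from htneg.le)
          (show -δ ∈ Set.Iic (0:ℝ) by simp; linarith) htδ
      have hlog : Real.log (h (-δ)) ≤ Real.log (h t) :=
        Real.log_le_log (hpos (-δ)) hht
      have hδ2 := hδ' (-δ) (by rw [abs_neg, abs_of_pos hδ]; exact hδ)
        (by rw [abs_neg, abs_of_pos hδ])
      have : (p/2) * (-δ) ^ 2 = (p/2) * δ ^ 2 := by ring
      calc (p/2) * δ ^ 2 ≤ Real.log (h (-δ)) := by rw [← this]; exact hδ2.le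
        _ ≤ Real.log (h t) := hlog
end

section
/- Markov chain information vector transfer: if X ↔ Y ↔ V form a Markov chain, then for each v, the information vector φ^{X|V}_v of P_{X|V}(·|v) relative to P_X satisfies φ^{X|V}_v = Bᵀ φ^{Y|V}_v, where φ^{Y|V}_v is the information vector of P_{Y|V}(·|v) relative to P_Y and B is the CDM of (X,Y). -/
/-- Markov chain information vector transfer: if X ↔ Y ↔ V is a Markov chain,
then φ^{X|V}_v = Bᵀ φ^{Y|V}_v. -/
theorem stmt_10 {X Y V : Type*} [Fintype X] [Fintype Y] [Fintype V]
    (Pj : X → Y → V → ℝ)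
    (h0 : ∀ x y v, 0 ≤ Pj x y v) (h1 : ∑ x, ∑ y, ∑ v, Pj x y v = 1)
    (PX : X → ℝ) (PY : Y → ℝ) (PV : V → ℝ)
    (Pxy : X → Y → ℝ) (Pyv : Y → V → ℝ)
    (hPX : ∀ x, PX x = ∑ y, ∑ v, Pj x y v)
    (hPY : ∀ y, PY y = ∑ x, ∑ v, Pj x y v)
    (hPV : ∀ v, PV v = ∑ x, ∑ y, Pj x y v)
    (hPxy : ∀ x y, Pxy x y = ∑ v, Pj x y v)
    (hPyv : ∀ y v, Pyv y v = ∑ x, Pj x y v)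
    (hPXpos : ∀ x, 0 < PX x) (hPYpos : ∀ y, 0 < PY y) (hPVpos : ∀ v, 0 < PV v)
    (hMarkov : ∀ x y v, Pj x y v * PY y = Pxy x y * Pyv y v)
    (B : Matrix Y X ℝ)
    (hB : ∀ y x, B y x = (Pxy x y - PX x * PY y) / Real.sqrt (PX x * PY y)) :
    ∀ v x, ((∑ y, Pj x y v) / PV v - PX x) / Real.sqrt (PX x) =
      ∑ y, B y x * ((Pyv y v / PV v - PY y) / Real.sqrt (PY y)) := by
  intro v x
  have hsXpos : 0 < Real.sqrt (PX x) := Real.sqrt_pos.2 (hPXpos x)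
  have hPj : ∀ y, Pj x y v = Pxy x y * Pyv y v / PY y := by
    intro y
    rw [eq_div_iff (hPYpos y).ne']
    exact hMarkov x y v
  have hsum1 : ∑ y, Pxy x y = PX x := by
    simp only [hPxy, hPX]
  have hsum2 : ∑ y, Pyv y v = PV v := by
    rw [hPV]
    simp only [hPyv]
    exact Finset.sum_comm
  have hsum3 : ∑ y, PY y = 1 := by
    rw [← h1]
    simp only [hPY]
    exact Finset.sum_comm
  have key : ∀ y, B y x * ((Pyv y v / PV v - PY y) / Real.sqrt (PY y))
      = (Pj x y v / PV v - Pxy x y - PX x * (Pyv y v / PV v - PY y)) / Real.sqrt (PX x) := by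
    intro y
    have hsYpos : 0 < Real.sqrt (PY y) := Real.sqrt_pos.2 (hPYpos y)
    rw [hB, hPj, Real.sqrt_mul (hPXpos x).le]
    set u := Real.sqrt (PX x) with hu0
    set w := Real.sqrt (PY y) with hw0
    have hu : PX x = u ^ 2 := (Real.sq_sqrt (hPXpos x).le).symm
    have hw : PY y = w ^ 2 := (Real.sq_sqrt (hPYpos y).le).symm
    rw [hu, hw]
    have h1' : u ≠ 0 := hsXpos.ne'
    have h2' : w ≠ 0 := hsYpos.ne'
    have h3' : PV v ≠ 0 := (hPVpos v).ne'
    field_simp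
  rw [Finset.sum_congr rfl (fun y _ => key y), ← Finset.sum_div]
  congr 1
  rw [Finset.sum_sub_distrib, Finset.sum_sub_distrib, ← Finset.sum_div, hsum1,
    ← Finset.mul_sum, Finset.sum_sub_distrib, ← Finset.sum_div, hsum2, hsum3]
  have h3' : PV v ≠ 0 := (hPVpos v).ne'
  field_simp
  ring
end
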